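/- If u and v are two pendant vertices of an oriented graph G^σ with the same neighbor, then sr(G^σ) = sr(G^σ - u) = sr(G^σ - v). -/

import Mathlib

/-- S is the skew-adjacency matrix of some oriented graph: it is skew-symmetric
with entries in {0, 1, -1}. -/
def IsSkewAdjacency {V : Type} [Fintype V] [DecidableEq V] (S : Matrix V V ℝ) : Prop :=
  S.transpose = -S ∧ ∀ i j : V, S i j = 0 ∨ S i j = 1 ∨ S i j = -1

/-- S is the skew-adjacency matrix of an orientation of the simple graph G. -/
def IsSkewAdjacencyOf {V : Type} [Fintype V] [DecidableEq V]
    (S : Matrix V V ℝ) (G : SimpleGraph V) : Prop :=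
  IsSkewAdjacency S ∧ ∀ i j : V, S i j ≠ 0 ↔ G.Adj i j

open Matrix in
/-- Removing a column that is a multiple of another column preserves the rank. -/
lemma rank_drop_col_aux {m n : Type} [Fintype m] [Fintype n] [DecidableEq n]
    (A : Matrix m n ℝ) (u v : n) (huv : u ≠ v) (c : ℝ)
    (hcol : ∀ x, A x u = c * A x v) :
    A.rank = (A.submatrix (id : m → m) (fun x : {x : n // x ≠ u} => (x : n))).rank := by
  rw [Matrix.rank_eq_finrank_span_cols, Matrix.rank_eq_finrank_span_cols]
  suffices h : Submodule.span ℝ (Set.range Aᵀ) = Submodule.span ℝ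
      (Set.range (A.submatrix (id : m → m) (fun x : {x : n // x ≠ u} => (x : n)))ᵀ) by
    exact congrArg (fun s : Submodule ℝ (m → ℝ) => Module.finrank ℝ s) h
  apply le_antisymm
  · rw [Submodule.span_le]
    rintro _ ⟨j, rfl⟩
    by_cases hj : j = u
    · have hAu : Aᵀ j = c • Aᵀ v := by
        funext x
        simp only [Matrix.transpose_apply, Pi.smul_apply, smul_eq_mul, hj]
        exact hcol x
      rw [hAu]
      exact Submodule.smul_mem _ _ (Submodule.subset_span ⟨⟨v, Ne.symm huv⟩, rfl⟩)
    · exact Submodule.subset_span ⟨⟨j, hj⟩, rfl⟩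
  · rw [Submodule.span_le]
    rintro _ ⟨j, rfl⟩
    exact Submodule.subset_span ⟨(j : n), rfl⟩

open Matrix in
/-- Removing a row that is a multiple of another row preserves the rank. -/
lemma rank_drop_row_aux {m n : Type} [Fintype m] [Fintype n] [DecidableEq m] [DecidableEq n]
    (A : Matrix m n ℝ) (u v : m) (huv : u ≠ v) (c : ℝ)
    (hrow : ∀ x, A u x = c * A v x) :
    A.rank = (A.submatrix (fun x : {x : m // x ≠ u} => (x : m)) (id : n → n)).rank := by
  rw [← Matrix.rank_transpose A,
    ← Matrix.rank_transpose (A.submatrix (fun x : {x : m // x ≠ u} => (x : m)) (id : n → n))]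
  exact rank_drop_col_aux Aᵀ u v huv c (fun x => hrow x)

lemma skewRank_delete_pendant_aux
    {V : Type} [Fintype V] [DecidableEq V] (G : SimpleGraph V)
    (S : Matrix V V ℝ) (hS : IsSkewAdjacencyOf S G)
    (u v w : V) (huv : u ≠ v)
    (hu : G.Adj u w) (hv : G.Adj v w)
    (hupend : ∀ x : V, G.Adj u x → x = w)
    (hvpend : ∀ x : V, G.Adj v x → x = w) :
    S.rank =
      (S.submatrix (fun x : {x : V // x ≠ u} => (x : V))
        (fun x : {x : V // x ≠ u} => (x : V))).rank := by
  obtain ⟨⟨hskew, _⟩, hadj⟩ := hS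
  have hvw : S v w ≠ 0 := (hadj v w).mpr hv
  set c : ℝ := S u w / S v w with hc
  have hrow : ∀ x, S u x = c * S v x := by
    intro x
    by_cases hx : x = w
    · subst hx
      rw [hc, div_mul_cancel₀ _ hvw]
    · have h1 : S u x = 0 := by
        by_contra h
        exact hx (hupend x ((hadj u x).mp h))
      have h2 : S v x = 0 := by
        by_contra h
        exact hx (hvpend x ((hadj v x).mp h))
      rw [h1, h2, mul_zero]
  have hsk : ∀ a b, S b a = -S a b := by
    intro a b
    have := congrFun (congrFun hskew a) b
    simpa using this
  have hcol : ∀ x, S x u = c * S x v := by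
    intro x
    rw [hsk u x, hsk v x, hrow x]
    ring
  have step1 : S.rank =
      (S.submatrix (id : V → V) (fun x : {x : V // x ≠ u} => (x : V))).rank :=
    rank_drop_col_aux S u v huv c hcol
  have step2 : (S.submatrix (id : V → V) (fun x : {x : V // x ≠ u} => (x : V))).rank =
      ((S.submatrix (id : V → V) (fun x : {x : V // x ≠ u} => (x : V))).submatrix
        (fun x : {x : V // x ≠ u} => (x : V)) (id : _ → _)).rank :=
    rank_drop_row_aux _ u v huv c (fun x => hrow x)
  exact step1.trans step2

/-- Deleting one of two pendant twins (pendant vertices with a common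
neighbour) does not change the skew-rank. -/
theorem skewRank_delete_pendant_twin
    {V : Type} [Fintype V] [DecidableEq V] (G : SimpleGraph V)
    (S : Matrix V V ℝ) (hS : IsSkewAdjacencyOf S G)
    (u v w : V) (huv : u ≠ v)
    (hu : G.Adj u w) (hv : G.Adj v w)
    (hupend : ∀ x : V, G.Adj u x → x = w)
    (hvpend : ∀ x : V, G.Adj v x → x = w) :
    S.rank =
      (S.submatrix (fun x : {x : V // x ≠ u} => (x : V))
        (fun x : {x : V // x ≠ u} => (x : V))).rank ∧
    S.rank =
      (S.submatrix (fun x : {x : V // x ≠ v} => (x : V))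
        (fun x : {x : V // x ≠ v} => (x : V))).rank := by
  exact ⟨skewRank_delete_pendant_aux G S hS u v w huv hu hv hupend hvpend,
    skewRank_delete_pendant_aux G S hS v u w huv.symm hv hu hvpend hupend⟩
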